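/- Let k be a field, n ≥ 1, and let 𝔟 be a Borel subalgebra of gl_n(k) containing the diagonal subalgebra 𝔱. Let h ∈ GL_n(k). Then ∑_{𝔟' ∈ B_𝔱} (𝔟' ∩ h𝔟₀h⁻¹) = h𝔟₀h⁻¹, where B_𝔱 is the set of Borel subalgebras of gl_n(k) containing 𝔱 and 𝔟₀ is the upper triangular Borel subalgebra. Equivalently, every conjugate of 𝔟₀ is spanned by its intersections with the n! Borel subalgebras containing the diagonal torus. -/

import Mathlib

open Matrix
/-- The Borel subalgebra of upper triangular matrices, as a `k`-submodule of `gl_n(k)`. -/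
def borel0 (k : Type*) [Field k] (n : ℕ) : Submodule k (Matrix (Fin n) (Fin n) k) where
  carrier := {M | ∀ i j : Fin n, j < i → M i j = 0}
  add_mem' := by intro a b ha hb i j hij; simp [Matrix.add_apply, ha i j hij, hb i j hij]
  zero_mem' := by intro i j hij; simp
  smul_mem' := by intro c a ha i j hij; simp [Matrix.smul_apply, ha i j hij]

/-- Conjugation `A ↦ g⁻¹ A g` as a `k`-linear endomorphism of `gl_n(k)`. -/
noncomputable def conjMap (k : Type*) [Field k] (n : ℕ) (g : Matrix (Fin n) (Fin n) k) :
    Matrix (Fin n) (Fin n) k →ₗ[k] Matrix (Fin n) (Fin n) k :=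
  (LinearMap.mulLeft k g⁻¹).comp (LinearMap.mulRight k g)

/-- `𝔟_g = g⁻¹ 𝔟₀ g`, the conjugate Borel subalgebra. -/
noncomputable def borelConj (k : Type*) [Field k] (n : ℕ) (g : Matrix (Fin n) (Fin n) k) :
    Submodule k (Matrix (Fin n) (Fin n) k) :=
  (borel0 k n).map (conjMap k n g)


/-- The Borel subalgebra `h 𝔟₀ h⁻¹`. -/
noncomputable def borelPos (k : Type*) [Field k] (n : ℕ) (h : Matrix (Fin n) (Fin n) k) :
    Submodule k (Matrix (Fin n) (Fin n) k) :=
  (borel0 k n).map ((LinearMap.mulLeft k h).comp (LinearMap.mulRight k h⁻¹))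

section Helpers
variable {k : Type*} [Field k] {n : ℕ}

lemma vecMulVec_mul_left (A : Matrix (Fin n) (Fin n) k) (u w : Fin n → k) :
    A * vecMulVec u w = vecMulVec (A *ᵥ u) w := by
  ext i j
  simp only [mul_apply, vecMulVec_apply, mulVec, dotProduct, Finset.sum_mul, mul_assoc]

lemma vecMulVec_mul_right (A : Matrix (Fin n) (Fin n) k) (u w : Fin n → k) :
    vecMulVec u w * A = vecMulVec u (w ᵥ* A) := by
  ext i j
  simp only [mul_apply, vecMulVec_apply, vecMul, dotProduct, Finset.mul_sum, mul_assoc]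

lemma permMatrix_apply' (σ : Equiv.Perm (Fin n)) (i j : Fin n) :
    (σ.permMatrix k) i j = if σ i = j then 1 else 0 := by
  simp [Equiv.Perm.permMatrix, PEquiv.toMatrix_apply, Equiv.toPEquiv_apply, eq_comm]

lemma permMatrix_mul_symm (σ : Equiv.Perm (Fin n)) :
    (σ.permMatrix k) * (Equiv.Perm.permMatrix k σ⁻¹) = 1 := by
  have := PEquiv.toMatrix_toPEquiv_mul σ (Equiv.Perm.permMatrix k σ⁻¹)
  rw [this]
  ext i j
  simp only [submatrix_apply, id_eq, permMatrix_apply', one_apply, (fun x => σ.symm_apply_apply x : ∀ x, σ⁻¹ (σ x) = x),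
    Equiv.Perm.inv_def, Equiv.symm_apply_eq]

lemma permMatrix_inv (σ : Equiv.Perm (Fin n)) :
    (σ.permMatrix k)⁻¹ = (Equiv.Perm.permMatrix k σ⁻¹) :=
  Matrix.inv_eq_right_inv (permMatrix_mul_symm σ)

end Helpers

section Conj
variable {k : Type*} [Field k] {n : ℕ}

lemma mem_borelConj_of (σ : Equiv.Perm (Fin n)) (X : Matrix (Fin n) (Fin n) k)
    (hX : ∀ a b : Fin n, b < a → X (σ a) (σ b) = 0) :
    X ∈ borelConj k n (Equiv.Perm.permMatrix k σ) := by
  refine Submodule.mem_map.mpr ⟨X.submatrix σ σ, ?_, ?_⟩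
  · intro a b hb
    exact hX a b hb
  · show (LinearMap.mulLeft k (Equiv.Perm.permMatrix k σ)⁻¹).comp
      (LinearMap.mulRight k (Equiv.Perm.permMatrix k σ)) (X.submatrix σ σ) = X
    simp only [LinearMap.coe_comp, Function.comp_apply, LinearMap.mulRight_apply,
      LinearMap.mulLeft_apply]
    rw [permMatrix_inv]
    show (Equiv.Perm.permMatrix k σ⁻¹) * (X.submatrix ⇑σ ⇑σ * (σ.toPEquiv.toMatrix)) = X
    rw [PEquiv.mul_toMatrix_toPEquiv]
    show (σ⁻¹ : Equiv.Perm (Fin n)).toPEquiv.toMatrix * _ = X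
    rw [PEquiv.toMatrix_toPEquiv_mul]
    ext i j
    simp
end Conj
section Pivot
variable {k : Type*} [Field k] {n : ℕ}

/-- Columns `c < i` are those of `h`; column `c ≥ i` is the basis vector `e_{q c}`. -/
def Dmat (h : Matrix (Fin n) (Fin n) k) (q : Equiv.Perm (Fin n)) (i : ℕ) :
    Matrix (Fin n) (Fin n) k :=
  Matrix.of fun r c => if (c : ℕ) < i then h r c else if r = q c then 1 else 0

lemma Dmat_apply (h : Matrix (Fin n) (Fin n) k) (q : Equiv.Perm (Fin n)) (i : ℕ) (r c : Fin n) :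
    Dmat h q i r c = if (c : ℕ) < i then h r c else if r = q c then 1 else 0 := rfl

lemma Dmat_of_ge (h : Matrix (Fin n) (Fin n) k) (q : Equiv.Perm (Fin n)) {i : ℕ} (hi : n ≤ i) :
    Dmat h q i = h := by
  ext r c
  rw [Dmat_apply, if_pos (lt_of_lt_of_le c.isLt hi)]

lemma det_updateColumn_single_sum (A : Matrix (Fin n) (Fin n) k) (m : Fin n) (x : Fin n → k) :
    (A.updateCol m (fun r => ∑ j, x j * (Pi.single j 1 : Fin n → k) r)).det
      = ∑ j, x j * (A.updateCol m (Pi.single j 1)).det := by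
  classical
  have key : ∀ s : Finset (Fin n),
      (A.updateCol m (fun r => ∑ j ∈ s, x j * (Pi.single j 1 : Fin n → k) r)).det
        = ∑ j ∈ s, x j * (A.updateCol m (Pi.single j 1)).det := by
    intro s
    induction s using Finset.induction with
    | empty =>
        simp only [Finset.sum_empty]
        exact det_eq_zero_of_column_eq_zero m (by simp [Matrix.updateCol_apply])
    | insert a s' hnotmem ih =>
        simp only [Finset.sum_insert hnotmem]
        have heq : (fun r => x a * (Pi.single a 1 : Fin n → k) r + ∑ j ∈ s', x j * (Pi.single j 1 : Fin n → k) r)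
            = ((x a • (Pi.single a 1 : Fin n → k))
                + (fun r' => ∑ j ∈ s', x j * (Pi.single j 1 : Fin n → k) r')) := by
          funext r; simp
        rw [heq, det_updateCol_add, det_updateCol_smul, ih]
  exact key Finset.univ

lemma exists_pivot (h : Matrix (Fin n) (Fin n) k) (hh : IsUnit h) :
    ∃ q : Equiv.Perm (Fin n), ∀ i : ℕ, IsUnit (Dmat h q i).det := by
  classical
  suffices H : ∀ kk : ℕ, ∃ q : Equiv.Perm (Fin n),
      ∀ i : ℕ, n - kk ≤ i → IsUnit (Dmat h q i).det by
    obtain ⟨q, hq⟩ := H n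
    exact ⟨q, fun i => hq i (by omega)⟩
  intro kk
  induction kk with
  | zero =>
      refine ⟨1, fun i hi => ?_⟩
      rw [Dmat_of_ge h 1 (by omega)]
      exact (Matrix.isUnit_iff_isUnit_det h).mp hh
  | succ kk ih =>
      obtain ⟨q, hq⟩ := ih
      by_cases hkn : n ≤ kk
      · exact ⟨q, fun i hi => hq i (by omega)⟩
      push_neg at hkn
      set m : ℕ := n - (kk + 1) with hm
      have hmn : m < n := by omega
      have hm1 : m + 1 = n - kk := by omega
      set mf : Fin n := ⟨m, hmn⟩ with hmf
      have hmfv : (mf : ℕ) = m := rfl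
      -- find a pivot column index j
      have hex : ∃ j : Fin n, IsUnit ((Dmat h q (m + 1)).updateCol mf (Pi.single j 1)).det := by
        by_contra hcon
        push_neg at hcon
        have hz : ∀ j : Fin n, ((Dmat h q (m + 1)).updateCol mf (Pi.single j 1)).det = 0 :=
          fun j => by have := hcon j; rwa [isUnit_iff_ne_zero, not_not] at this
        have hcol : (fun r => Dmat h q (m+1) r mf)
            = fun r => ∑ j, h j mf * (Pi.single j 1 : Fin n → k) r := by
          funext r
          rw [Dmat_apply, if_pos (show (mf:ℕ) < m + 1 from Nat.lt_succ_self m)]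
          simp [Pi.single_apply, mul_ite, Finset.sum_ite_eq]
        have hdz : (Dmat h q (m+1)).det = 0 := by
          have hds := det_updateColumn_single_sum (Dmat h q (m+1)) mf (fun j => h j mf)
          rw [← hcol, Matrix.updateCol_eq_self] at hds
          rw [hds]
          simp [hz]
        have hu := hq (m+1) (by omega)
        rw [hdz] at hu
        exact one_ne_zero (isUnit_zero_iff.mp hu).symm
      obtain ⟨j, hj⟩ := hex
      have hsymm : ((q⁻¹ j : Fin n) : ℕ) ≤ m := by
        by_contra hgt
        push_neg at hgt
        have hne : (q⁻¹ j : Fin n) ≠ mf := by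
          intro e; rw [e, hmfv] at hgt; omega
        have hdz : ((Dmat h q (m + 1)).updateCol mf (Pi.single j 1)).det = 0 := by
          refine det_zero_of_column_eq (Ne.symm hne) (fun r => ?_)
          rw [Matrix.updateCol_apply, Matrix.updateCol_apply, if_pos rfl, if_neg hne,
            Dmat_apply, if_neg (by omega)]
          simp [Pi.single_apply, (fun x => q.apply_symm_apply x : ∀ x, q (q⁻¹ x) = x)]
        rw [hdz] at hj
        exact one_ne_zero (isUnit_zero_iff.mp hj).symm
      set q' : Equiv.Perm (Fin n) := q * Equiv.swap mf (q⁻¹ j) with hq'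
      have hfix : ∀ c : Fin n, m < (c : ℕ) → q' c = q c := by
        intro c hc
        rw [hq']
        simp only [Equiv.Perm.mul_apply]
        rw [Equiv.swap_apply_of_ne_of_ne
          (by intro e; rw [e, hmfv] at hc; omega)
          (by intro e; rw [e] at hc; omega)]
      have hsame : ∀ i : ℕ, m + 1 ≤ i → Dmat h q' i = Dmat h q i := by
        intro i hi
        ext r c
        rw [Dmat_apply, Dmat_apply]
        by_cases hci : (c : ℕ) < i
        · rw [if_pos hci, if_pos hci]
        · rw [if_neg hci, if_neg hci, hfix c (by omega)]
      have hnew : Dmat h q' m = (Dmat h q (m + 1)).updateCol mf (Pi.single j 1) := by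
        ext r c
        rw [Dmat_apply, Matrix.updateCol_apply]
        by_cases hcm : c = mf
        · rw [if_pos hcm, hcm, if_neg (show ¬ ((mf:ℕ) < m) by rw [hmfv]; omega)]
          have hqm : q' mf = j := by
            rw [hq']
            simp [Equiv.swap_apply_left]
          rw [hqm]
          simp [Pi.single_apply]
        · rw [if_neg hcm, Dmat_apply]
          have hcne : (c : ℕ) ≠ m := fun e => hcm (Fin.ext (by rw [hmfv, e]))
          by_cases hcl : (c : ℕ) < m
          · rw [if_pos hcl, if_pos (by omega)]
          · have hcgt : m < (c : ℕ) := by omega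
            rw [if_neg hcl, if_neg (show ¬ ((c:ℕ) < m + 1) by omega), hfix c hcgt]
      refine ⟨q', fun i hi => ?_⟩
      rcases eq_or_lt_of_le hi with h' | h'
      · rw [← h', hnew]
        exact hj
      · rw [hsame i (by omega)]
        exact hq i (by omega)

end Pivot
section Main
variable {k : Type*} [Field k] {n : ℕ}

/-- coefficients of column `i` of `h` in the basis given by `Dmat h q i`. -/
noncomputable def cvec (h : Matrix (Fin n) (Fin n) k) (q : Equiv.Perm (Fin n)) (i : Fin n) :
    Fin n → k :=
  (Dmat h q (i : ℕ))⁻¹ *ᵥ (fun r => h r i)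

/-- low part of the coefficients. -/
noncomputable def yv (h : Matrix (Fin n) (Fin n) k) (q : Equiv.Perm (Fin n)) (i : Fin n) :
    Fin n → k :=
  fun m => if (m : ℕ) < (i : ℕ) then cvec h q i m else 0

/-- high part of the coefficients. -/
noncomputable def zv (h : Matrix (Fin n) (Fin n) k) (q : Equiv.Perm (Fin n)) (i : Fin n) :
    Fin n → k :=
  fun m => if (i : ℕ) ≤ (m : ℕ) then cvec h q i m else 0

/-- the echelon-adapted basis vector. -/
noncomputable def vv (h : Matrix (Fin n) (Fin n) k) (q : Equiv.Perm (Fin n)) (i : Fin n) :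
    Fin n → k :=
  fun r => zv h q i (q.symm r)

noncomputable def xv (h : Matrix (Fin n) (Fin n) k) (q : Equiv.Perm (Fin n)) (i : Fin n) :
    Fin n → k :=
  (Pi.single i 1 : Fin n → k) - yv h q i

/-- adapted row vectors. -/
noncomputable def psiv (h : Matrix (Fin n) (Fin n) k) (q : Equiv.Perm (Fin n)) (i : ℕ)
    (t : Fin n) : Fin n → k :=
  (Pi.single t 1 : Fin n → k) ᵥ* (Dmat h q i)⁻¹

variable (h : Matrix (Fin n) (Fin n) k) (q : Equiv.Perm (Fin n))

lemma perm_sum (w : Fin n → k) (r : Fin n) :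
    ∑ m, (if r = q m then (1:k) else 0) * w m = w (q.symm r) := by
  rw [Finset.sum_eq_single (q.symm r)]
  · simp
  · intro m _ hm
    rw [if_neg (fun e => hm (by rw [e, Equiv.symm_apply_apply])), zero_mul]
  · simp

lemma delta_sum (w : Fin n → k) (r : Fin n) :
    ∑ r', w r' * (if r' = r then (1:k) else 0) = w r := by
  rw [Finset.sum_eq_single r]
  · simp
  · intro m _ hm; rw [if_neg hm, mul_zero]
  · simp

variable (hq : ∀ i : ℕ, IsUnit (Dmat h q i).det)

include hq

lemma Dmat_cvec (i : Fin n) : Dmat h q (i : ℕ) *ᵥ cvec h q i = fun r => h r i := by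
  rw [cvec, mulVec_mulVec, Matrix.mul_nonsing_inv _ (hq (i : ℕ)), one_mulVec]

omit hq

lemma h_yv (i : Fin n) : h *ᵥ yv h q i = Dmat h q (i : ℕ) *ᵥ yv h q i := by
  funext r
  simp only [mulVec, dotProduct]
  refine Finset.sum_congr rfl (fun m _ => ?_)
  by_cases hm : (m : ℕ) < (i : ℕ)
  · rw [Dmat_apply, if_pos hm]
  · rw [yv]; simp [hm]

lemma Dmat_zv (i : Fin n) : Dmat h q (i : ℕ) *ᵥ zv h q i = vv h q i := by
  funext r
  show ∑ m, Dmat h q (i:ℕ) r m * zv h q i m = zv h q i (q.symm r)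
  rw [← perm_sum q (zv h q i) r]
  refine Finset.sum_congr rfl (fun m _ => ?_)
  by_cases hm : (m : ℕ) < (i : ℕ)
  · rw [Dmat_apply, if_pos hm]
    have : zv h q i m = 0 := by rw [zv]; simp [Nat.not_le.mpr hm]
    rw [this, mul_zero, mul_zero]
  · rw [Dmat_apply, if_neg hm]

include hq

lemma h_xv (i : Fin n) : h *ᵥ xv h q i = vv h q i := by
  have hc : yv h q i + zv h q i = cvec h q i := by
    funext m
    by_cases hm : (m : ℕ) < (i : ℕ) <;> simp [yv, zv, hm, Nat.not_le.mpr, Nat.le_of_not_lt] <;> omega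
  have hcol : h *ᵥ (Pi.single i 1 : Fin n → k) = Dmat h q (i:ℕ) *ᵥ (yv h q i + zv h q i) := by
    rw [hc, Dmat_cvec h q hq i]
    simp
    rfl
  rw [xv, mulVec_sub, hcol, mulVec_add, h_yv, Dmat_zv]
  abel

lemma psiv_vecMul_Dmat (i : ℕ) (t : Fin n) :
    psiv h q i t ᵥ* Dmat h q i = (Pi.single t 1 : Fin n → k) := by
  rw [psiv, vecMul_vecMul, Matrix.nonsing_inv_mul _ (hq i), vecMul_one]

lemma psiv_h_low (i t c : Fin n) (hit : (i:ℕ) ≤ (t:ℕ)) (hc : (c : ℕ) < (i : ℕ)) :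
    (psiv h q (i:ℕ) t ᵥ* h) c = 0 := by
  have : (psiv h q (i:ℕ) t ᵥ* h) c = (psiv h q (i:ℕ) t ᵥ* Dmat h q (i:ℕ)) c := by
    simp only [vecMul, dotProduct]
    refine Finset.sum_congr rfl (fun r _ => ?_)
    rw [Dmat_apply, if_pos hc]
  rw [this, psiv_vecMul_Dmat h q hq, Pi.single_apply,
    if_neg (fun e => by rw [e] at hc; omega)]

lemma psiv_supp (i t r : Fin n) (hr : (i:ℕ) ≤ ((q.symm r : Fin n) : ℕ)) (hrt : r ≠ q t) :
    psiv h q (i:ℕ) t r = 0 := by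
  have h1 := congrFun (psiv_vecMul_Dmat h q hq (i:ℕ) t) (q.symm r)
  have h2 : (psiv h q (i:ℕ) t ᵥ* Dmat h q (i:ℕ)) (q.symm r) = psiv h q (i:ℕ) t r := by
    simp only [vecMul, dotProduct]
    rw [← delta_sum (psiv h q (i:ℕ) t) r]
    refine Finset.sum_congr rfl (fun r' _ => ?_)
    rw [Dmat_apply, if_neg (by omega), Equiv.apply_symm_apply]
  rw [h2] at h1
  rw [h1, Pi.single_apply, if_neg (fun e => hrt (by rw [← e, Equiv.apply_symm_apply]))]

omit hq
end Main
section Gen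
variable {k : Type*} [Field k] {n : ℕ}

lemma vecMulVec_add_left (u v w : Fin n → k) :
    vecMulVec (u + v) w = vecMulVec u w + vecMulVec v w := by
  ext i j; simp [vecMulVec_apply, add_mul]

lemma vecMulVec_sum_left (s : Finset (Fin n)) (f : Fin n → Fin n → k) (w : Fin n → k) :
    vecMulVec (∑ m ∈ s, f m) w = ∑ m ∈ s, vecMulVec (f m) w := by
  ext i j
  simp [vecMulVec_apply, Matrix.sum_apply, Finset.sum_mul]

lemma vecMulVec_smul_left (c : k) (u w : Fin n → k) :
    vecMulVec (c • u) w = c • vecMulVec u w := by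
  ext i j; simp [vecMulVec_apply, mul_assoc]

lemma vecMulVec_sum_right (s : Finset (Fin n)) (u : Fin n → k) (f : Fin n → Fin n → k) :
    vecMulVec u (∑ m ∈ s, f m) = ∑ m ∈ s, vecMulVec u (f m) := by
  ext i j
  simp [vecMulVec_apply, Matrix.sum_apply, Finset.mul_sum]

lemma vecMulVec_smul_right (c : k) (u w : Fin n → k) :
    vecMulVec u (c • w) = c • vecMulVec u w := by
  ext i j
  simp only [vecMulVec_apply, Pi.smul_apply, smul_eq_mul, Matrix.smul_apply]
  ring

variable (h : Matrix (Fin n) (Fin n) k) (q : Equiv.Perm (Fin n))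
variable (hh : IsUnit h) (hq : ∀ i : ℕ, IsUnit (Dmat h q i).det)

/-- The generators: rank-one matrices `vv i ⊗ psiv i t`. -/
noncomputable def genMat (i t : Fin n) : Matrix (Fin n) (Fin n) k :=
  vecMulVec (vv h q i) (psiv h q (i:ℕ) t)

include hh hq

lemma genMat_mem_borelPos (i t : Fin n) (hit : (i:ℕ) ≤ (t:ℕ)) :
    genMat h q i t ∈ borelPos k n h := by
  have hdet : IsUnit h.det := (Matrix.isUnit_iff_isUnit_det h).mp hh
  refine Submodule.mem_map.mpr ⟨vecMulVec (xv h q i) (psiv h q (i:ℕ) t ᵥ* h), ?_, ?_⟩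
  · -- upper triangular
    intro a b hba
    rw [vecMulVec_apply]
    by_cases hbi : (b : ℕ) < (i : ℕ)
    · rw [psiv_h_low h q hq i t b hit hbi, mul_zero]
    · have hai : (i : ℕ) < (a : ℕ) := by
        have : (b : ℕ) < (a : ℕ) := hba
        omega
      have : xv h q i a = 0 := by
        rw [xv]
        simp only [Pi.sub_apply, Pi.single_apply, yv]
        rw [if_neg (fun e : a = i => by rw [e] at hai; omega),
          if_neg (by omega)]
        ring
      rw [this, zero_mul]
  · show (LinearMap.mulLeft k h).comp (LinearMap.mulRight k h⁻¹) _ = genMat h q i t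
    simp only [LinearMap.coe_comp, Function.comp_apply, LinearMap.mulRight_apply,
      LinearMap.mulLeft_apply]
    rw [vecMulVec_mul_right, vecMul_vecMul, Matrix.mul_nonsing_inv _ hdet, vecMul_one,
      vecMulVec_mul_left, h_xv h q hq i]
    rfl

omit hh

lemma genMat_mem_borelConj (i t : Fin n) (hit : (i:ℕ) ≤ (t:ℕ)) :
    ∃ σ : Equiv.Perm (Fin n),
      genMat h q i t ∈ borelConj k n (Equiv.Perm.permMatrix k σ) := by
  classical
  set κ : Fin n → ℕ := fun r => if r = q t then 1 else if (i:ℕ) ≤ ((q.symm r : Fin n) : ℕ) then 0 else 2 with hκ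
  set σ : Equiv.Perm (Fin n) := Tuple.sort κ with hσ
  have hmono : Monotone (κ ∘ σ) := Tuple.monotone_sort κ
  refine ⟨σ, mem_borelConj_of σ _ (fun a b hba => ?_)⟩
  by_contra hne
  have hv : vv h q i (σ a) ≠ 0 := fun e => hne (by rw [genMat, vecMulVec_apply, e, zero_mul])
  have hp : psiv h q (i:ℕ) t (σ b) ≠ 0 := fun e => hne (by rw [genMat, vecMulVec_apply, e, mul_zero])
  have hva : (i:ℕ) ≤ ((q.symm (σ a) : Fin n) : ℕ) := by
    by_contra hlt
    exact hv (by rw [vv, zv, if_neg (by omega)])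
  have hpb : ¬ ((i:ℕ) ≤ ((q.symm (σ b) : Fin n) : ℕ)) ∨ σ b = q t := by
    by_contra hcon
    push_neg at hcon
    exact hp (psiv_supp h q hq i t (σ b) (by omega) hcon.2)
  have hka : κ (σ a) ≤ 1 := by
    rw [hκ]
    by_cases he : σ a = q t
    · simp [he]
    · simp only [if_neg he, if_pos hva]
      omega
  have hkb : 1 ≤ κ (σ b) := by
    rw [hκ]
    by_cases he : σ b = q t
    · simp [he]
    · rcases hpb with hlow | heq
      · simp only [if_neg he, if_neg hlow]
        omega
      · exact absurd heq he
  have hle : κ (σ b) ≤ κ (σ a) := hmono (le_of_lt hba)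
  have ha1 : σ a = q t := by
    by_contra he
    have h1 : κ (σ a) = 0 := by simp only [hκ]; rw [if_neg he, if_pos hva]
    omega
  have hb1 : σ b = q t := by
    by_contra he
    rcases hpb with hlow | heq
    · have h1 : κ (σ b) = 2 := by simp only [hκ]; rw [if_neg he, if_neg hlow]
      omega
    · exact absurd heq he
  have : a = b := σ.injective (by rw [ha1, hb1])
  rw [this] at hba
  exact lt_irrefl b hba

end Gen
section Final
variable {k : Type*} [Field k] {n : ℕ}

lemma single_eq_smul_single (c : k) (t : Fin n) :
    (Pi.single t c : Fin n → k) = c • (Pi.single t 1 : Fin n → k) := by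
  ext r
  by_cases hr : r = t <;> simp [Pi.single_apply, hr]

lemma stdBasisMatrix_eq (i j : Fin n) (c : k) :
    Matrix.single i j c = c • vecMulVec (Pi.single i 1 : Fin n → k) (Pi.single j 1 : Fin n → k) := by
  ext a b
  simp only [Matrix.single, of_apply, Matrix.smul_apply, vecMulVec_apply, Pi.single_apply,
    smul_eq_mul]
  by_cases ha : i = a <;> by_cases hb : j = b <;> simp [ha, hb, eq_comm]

end Final

/-- Every conjugate `h𝔟₀h⁻¹` of the standard Borel is spanned by its intersections with the
`n!` Borel subalgebras containing the diagonal subalgebra `𝔱`, namely the `w⁻¹𝔟₀w` for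
`w ∈ S_n`:  `∑_{𝔟' ∈ B_𝔱} (𝔟' ∩ h𝔟₀h⁻¹) = h𝔟₀h⁻¹`. -/
theorem envelope_over_torus_borels (k : Type*) [Field k] (n : ℕ) (hn : 0 < n)
    (h : Matrix (Fin n) (Fin n) k) (hh : IsUnit h) :
    (⨆ b ∈ {S : Submodule k (Matrix (Fin n) (Fin n) k) |
              ∃ w : Equiv.Perm (Fin n), S = borelConj k n (Equiv.Perm.permMatrix k w)},
        (b ⊓ borelPos k n h))
      = borelPos k n h := by
  classical
  obtain ⟨q, hq⟩ := exists_pivot h hh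
  have hdet : IsUnit h.det := (Matrix.isUnit_iff_isUnit_det h).mp hh
  set S := (⨆ b ∈ {S : Submodule k (Matrix (Fin n) (Fin n) k) |
              ∃ w : Equiv.Perm (Fin n), S = borelConj k n (Equiv.Perm.permMatrix k w)},
        (b ⊓ borelPos k n h)) with hS
  refine le_antisymm (iSup₂_le fun b _ => inf_le_right) ?_
  -- generators are in S
  have genS : ∀ i t : Fin n, (i:ℕ) ≤ (t:ℕ) → genMat h q i t ∈ S := by
    intro i t hit
    obtain ⟨σ, hσ⟩ := genMat_mem_borelConj h q hq i t hit
    have hB := genMat_mem_borelPos h q hh hq i t hit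
    have hle : borelConj k n (Equiv.Perm.permMatrix k σ) ⊓ borelPos k n h ≤ S := by
      rw [hS]
      exact le_biSup (fun b => b ⊓ borelPos k n h) ⟨σ, rfl⟩
    exact hle ⟨hσ, hB⟩
  -- key induction
  have D1 : ∀ i : ℕ, ∀ hi : i < n, ∀ j : Fin n, i ≤ (j:ℕ) →
      vecMulVec (h *ᵥ (Pi.single ⟨i, hi⟩ 1 : Fin n → k))
        ((Pi.single j 1 : Fin n → k) ᵥ* h⁻¹) ∈ S := by
    intro i
    induction i using Nat.strong_induction_on with
    | _ i IH =>
      intro hi j hij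
      set ii : Fin n := ⟨i, hi⟩ with hii
      have hsplit : (Pi.single ii 1 : Fin n → k) = xv h q ii + yv h q ii := by
        rw [xv]; abel
      rw [hsplit, mulVec_add, vecMulVec_add_left]
      refine Submodule.add_mem _ ?_ ?_
      · -- principal term
        rw [h_xv h q hq ii]
        set φ : Fin n → k := (Pi.single j 1 : Fin n → k) ᵥ* h⁻¹ with hφdef
        set χ : Fin n → k := φ ᵥ* Dmat h q i with hχdef
        have hφh : φ ᵥ* h = (Pi.single j 1 : Fin n → k) := by
          rw [hφdef, vecMul_vecMul, Matrix.nonsing_inv_mul _ hdet, vecMul_one]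
        have hφ : φ = ∑ t, χ t • psiv h q i t := by
          have h1 : φ = χ ᵥ* (Dmat h q i)⁻¹ := by
            rw [hχdef, vecMul_vecMul, Matrix.mul_nonsing_inv _ (hq i), vecMul_one]
          rw [h1]
          have h2 : χ = ∑ t, χ t • (Pi.single t 1 : Fin n → k) := by
            rw [← Finset.univ_sum_single χ]
            refine Finset.sum_congr rfl fun t _ => ?_
            rw [Finset.univ_sum_single χ, single_eq_smul_single]
          conv_lhs => rw [h2]
          show (Dmat h q i)⁻¹.vecMulLinear (∑ t, χ t • (Pi.single t 1 : Fin n → k))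
            = ∑ t, χ t • psiv h q i t
          rw [map_sum]
          refine Finset.sum_congr rfl fun t _ => ?_
          rw [LinearMap.map_smul, Matrix.vecMulLinear_apply]
          rfl
        rw [hφ, vecMulVec_sum_right]
        refine Submodule.sum_mem _ fun t _ => ?_
        rw [vecMulVec_smul_right]
        by_cases hti : (i:ℕ) ≤ (t:ℕ)
        · exact Submodule.smul_mem _ _ (genS ii t hti)
        · have hχ0 : χ t = 0 := by
            have e1 : χ t = (φ ᵥ* h) t := by
              rw [hχdef]
              simp only [vecMul, dotProduct]
              refine Finset.sum_congr rfl fun r _ => ?_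
              rw [Dmat_apply, if_pos (by omega)]
            rw [e1, hφh, Pi.single_apply, if_neg (fun e => by rw [e] at hti; omega)]
          rw [hχ0, zero_smul]
          exact Submodule.zero_mem _
      · -- lower terms, by induction
        have hy : yv h q ii = ∑ m, yv h q ii m • (Pi.single m 1 : Fin n → k) := by
          rw [← Finset.univ_sum_single (yv h q ii)]
          refine Finset.sum_congr rfl fun m _ => ?_
          rw [Finset.univ_sum_single (yv h q ii), single_eq_smul_single]
        rw [hy]
        show vecMulVec (h.mulVecLin (∑ m, yv h q ii m • (Pi.single m 1 : Fin n → k)))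
          ((Pi.single j 1 : Fin n → k) ᵥ* h⁻¹) ∈ S
        rw [map_sum, vecMulVec_sum_left]
        refine Submodule.sum_mem _ fun m _ => ?_
        rw [LinearMap.map_smul, Matrix.mulVecLin_apply, vecMulVec_smul_left]
        by_cases hm : (m : ℕ) < i
        · refine Submodule.smul_mem _ _ ?_
          have := IH (m : ℕ) hm m.isLt j (by omega)
          simpa using this
        · have h0 : yv h q ii m = 0 := by
            rw [yv]
            simp only [hii]
            rw [if_neg hm]
          rw [h0, zero_smul]
          exact Submodule.zero_mem _
  -- assembly
  intro X hX
  obtain ⟨M, hM, rfl⟩ := Submodule.mem_map.mp hX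
  show (LinearMap.mulLeft k h).comp (LinearMap.mulRight k h⁻¹) M ∈ S
  simp only [LinearMap.coe_comp, Function.comp_apply, LinearMap.mulRight_apply,
    LinearMap.mulLeft_apply]
  have hMs : M = ∑ i, ∑ j, Matrix.single i j (M i j) := matrix_eq_sum_single M
  have key : h * (M * h⁻¹) = ∑ i, ∑ j, h * (Matrix.single i j (M i j) * h⁻¹) := by
    conv_lhs => rw [hMs]
    simp only [Finset.sum_mul, Finset.mul_sum]
  rw [key]
  refine Submodule.sum_mem _ fun i _ => Submodule.sum_mem _ fun j _ => ?_
  by_cases hji : j < i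
  · rw [hM i j hji, Matrix.single_zero]
    simp only [Matrix.zero_mul, Matrix.mul_zero]
    exact Submodule.zero_mem _
  · have hij : (i : ℕ) ≤ (j : ℕ) := by
      rcases Fin.lt_or_le j i with h' | h'
      · exact absurd h' hji
      · exact h'
    rw [stdBasisMatrix_eq, Matrix.smul_mul, Matrix.mul_smul]
    refine Submodule.smul_mem _ _ ?_
    rw [vecMulVec_mul_right, vecMulVec_mul_left]
    have := D1 (i : ℕ) i.isLt j hij
    simpa using this
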